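/- Let Λ be a row-finite, locally convex k-graph. Fix x ∈ Λ^{≤∞} and p, m, n ∈ ℕ^k with p ∧ d(x) = 0. Then the following are equivalent: (i) (x;(p+m, p+m+l)) ≈ (x;(p+n, p+n+l)) for all l ∈ ℕ^k (equivalently, σ^m(y) = σ^n(y) for the infinite path y = [x;(p,∞)] of the desourcification of Λ); (ii) σ^{m∧d(x)}(x) = σ^{n∧d(x)}(x) and m − m∧d(x) = n − n∧d(x). -/

import Mathlib

open scoped ENat

/-- `q ≤ m` coordinatewise, where `q ∈ ℕ^k` and `m ∈ (ℕ ∪ {∞})^k`. -/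
def leDeg (k : ℕ) (q : Fin k → ℕ) (m : Fin k → ℕ∞) : Prop :=
  ∀ i, (q i : ℕ∞) ≤ m i

/-- The coordinatewise minimum `m ∧ d` of `m ∈ ℕ^k` and `d ∈ (ℕ ∪ {∞})^k`,
viewed as an element of `ℕ^k`. -/
noncomputable def wedge {k : ℕ} (m : Fin k → ℕ) (dx : Fin k → ℕ∞) : Fin k → ℕ :=
  fun i => ((m i : ℕ∞) ⊓ dx i).toNat

lemma wedge_coe {k : ℕ} (m : Fin k → ℕ) (dx : Fin k → ℕ∞) (i : Fin k) :
    ((wedge m dx i : ℕ)  : ℕ∞) = (m i : ℕ∞) ⊓ dx i := by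
  have h : (m i : ℕ∞) ⊓ dx i ≠ ⊤ :=
    (inf_le_left.trans_lt (ENat.coe_lt_top (m i))).ne
  simpa [wedge] using ENat.coe_toNat h

lemma wedge_leDeg {k : ℕ} (m : Fin k → ℕ) (dx : Fin k → ℕ∞) :
    leDeg k (wedge m dx) dx := by
  intro i
  rw [wedge_coe]
  exact inf_le_right

/-- The data of a countable-free small category with a degree map: the underlying data
of a `k`-graph. -/
structure KGraphData (k : ℕ) where
  Obj : Type
  Mor : Type
  r : Mor → Obj
  s : Mor → Obj
  idm : Obj → Mor
  comp : Mor → Mor → Mor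
  d : Mor → Fin k → ℕ

/-- The axioms making `Λ` a `k`-graph: a small category together with a degree functor
`d : Λ → ℕ^k` satisfying the factorisation property. (Composition `comp f g` is only
constrained when `s f = r g`.) -/
structure IsKGraph {k : ℕ} (Λ : KGraphData k) : Prop where
  r_id : ∀ v, Λ.r (Λ.idm v) = v
  s_id : ∀ v, Λ.s (Λ.idm v) = v
  id_comp : ∀ f, Λ.comp (Λ.idm (Λ.r f)) f = f
  comp_id : ∀ f, Λ.comp f (Λ.idm (Λ.s f)) = f
  r_comp : ∀ f g, Λ.s f = Λ.r g → Λ.r (Λ.comp f g) = Λ.r f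
  s_comp : ∀ f g, Λ.s f = Λ.r g → Λ.s (Λ.comp f g) = Λ.s g
  assoc : ∀ f g h, Λ.s f = Λ.r g → Λ.s g = Λ.r h →
    Λ.comp (Λ.comp f g) h = Λ.comp f (Λ.comp g h)
  d_id : ∀ v, Λ.d (Λ.idm v) = 0
  d_comp : ∀ f g, Λ.s f = Λ.r g → Λ.d (Λ.comp f g) = Λ.d f + Λ.d g
  factor : ∀ (f : Λ.Mor) (m n : Fin k → ℕ), Λ.d f = m + n →
    ∃! p : Λ.Mor × Λ.Mor, Λ.s p.1 = Λ.r p.2 ∧ Λ.d p.1 = m ∧ Λ.d p.2 = n ∧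
      Λ.comp p.1 p.2 = f

/-- `Λ` is row-finite: `vΛ^n` is finite for every vertex `v` and degree `n`. -/
def RowFinite {k : ℕ} (Λ : KGraphData k) : Prop :=
  ∀ (v : Λ.Obj) (n : Fin k → ℕ), {f : Λ.Mor | Λ.r f = v ∧ Λ.d f = n}.Finite

/-- `Λ` is locally convex. -/
def LocallyConvex {k : ℕ} (Λ : KGraphData k) : Prop :=
  ∀ (i j : Fin k), i ≠ j → ∀ lam mu : Λ.Mor,
    Λ.d lam = Pi.single i 1 → Λ.d mu = Pi.single j 1 → Λ.r lam = Λ.r mu →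
    (∃ f, Λ.r f = Λ.s lam ∧ Λ.d f = Pi.single j 1) ∧
    (∃ g, Λ.r g = Λ.s mu ∧ Λ.d g = Pi.single i 1)

/-- A boundary path of `Λ`: a degree-preserving functor `x : Ω_{k,m} → Λ`
(encoded by its vertex map `vert` and segment map `seg`, constrained on
pairs `p ≤ q ≤ m = deg`) such that whenever `p ≤ m` and `p i = m i`,
`x(p)Λ^{e_i} = ∅`. -/
structure BPath (k : ℕ) (Λ : KGraphData k) where
  deg : Fin k → ℕ∞
  vert : (Fin k → ℕ) → Λ.Obj
  seg : (Fin k → ℕ) → (Fin k → ℕ) → Λ.Mor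
  seg_r : ∀ p q, p ≤ q → leDeg k q deg → Λ.r (seg p q) = vert p
  seg_s : ∀ p q, p ≤ q → leDeg k q deg → Λ.s (seg p q) = vert q
  seg_deg : ∀ p q, p ≤ q → leDeg k q deg → Λ.d (seg p q) = q - p
  seg_id : ∀ p, leDeg k p deg → seg p p = Λ.idm (vert p)
  seg_comp : ∀ p q t, p ≤ q → q ≤ t → leDeg k t deg →
    Λ.comp (seg p q) (seg q t) = seg p t
  boundary : ∀ (p : Fin k → ℕ) (i : Fin k), leDeg k p deg → (p i : ℕ∞) = deg i →
    ∀ e : Λ.Mor, Λ.r e = vert p → Λ.d e ≠ Pi.single i 1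

/-- Equality of boundary paths as functors: same degree and the same segments on
the common (valid) domain. -/
def BPath.eqv {k : ℕ} {Λ : KGraphData k} (x y : BPath k Λ) : Prop :=
  x.deg = y.deg ∧ ∀ p q, p ≤ q → leDeg k q x.deg → x.seg p q = y.seg p q

lemma leDeg_add {k : ℕ} {n q : Fin k → ℕ} {D : Fin k → ℕ∞}
    (hn : leDeg k n D) (hq : leDeg k q (fun i => D i - (n i : ℕ∞))) :
    leDeg k (q + n) D := by
  intro i
  have hqi := hq i
  have hni := hn i
  by_cases hD : D i = ⊤
  · rw [hD]; exact le_top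
  · lift D i to ℕ using hD with a ha
    rw [show ((a : ℕ∞) - (n i : ℕ∞)) = ((a - n i : ℕ) : ℕ∞) by
      exact_mod_cast (ENat.coe_sub a (n i)).symm] at hqi
    have h1 : q i ≤ a - n i := by exact_mod_cast hqi
    have h2 : n i ≤ a := by exact_mod_cast hni
    have h3 : q i + n i ≤ a := by omega
    show ((q i + n i : ℕ) : ℕ∞) ≤ (a : ℕ∞)
    exact_mod_cast h3

/-- The shift `σ^n(x)` of a boundary path `x` by `n ≤ d(x)`. -/
def BPath.shift {k : ℕ} {Λ : KGraphData k} (x : BPath k Λ) (n : Fin k → ℕ)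
    (h : leDeg k n x.deg) : BPath k Λ where
  deg := fun i => x.deg i - (n i : ℕ∞)
  vert := fun p => x.vert (p + n)
  seg := fun p q => x.seg (p + n) (q + n)
  seg_r := fun p q hpq hq =>
    x.seg_r (p + n) (q + n) (add_le_add_left hpq n) (leDeg_add h hq)
  seg_s := fun p q hpq hq =>
    x.seg_s (p + n) (q + n) (add_le_add_left hpq n) (leDeg_add h hq)
  seg_deg := by
    intro p q hpq hq
    rw [x.seg_deg (p + n) (q + n) (add_le_add_left hpq n) (leDeg_add h hq)]
    funext i
    simp only [Pi.sub_apply, Pi.add_apply]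
    omega
  seg_id := by
    intro p hp
    show x.seg (p + n) (p + n) = _
    rw [x.seg_id (p + n) (leDeg_add h hp)]
  seg_comp := fun p q t hpq hqt ht =>
    x.seg_comp (p + n) (q + n) (t + n) (add_le_add_left hpq n)
      (add_le_add_left hqt n) (leDeg_add h ht)
  boundary := by
    intro p i hp hpi e he
    refine x.boundary (p + n) i (leDeg_add h hp) ?_ e he
    have hni := h i
    have hpi' : (p i : ℕ∞) = x.deg i - (n i : ℕ∞) := hpi
    clear hpi
    by_cases hD : x.deg i = ⊤
    · rw [hD] at hpi'
      simp at hpi'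
    · lift x.deg i to ℕ using hD with a ha
      rw [show ((a : ℕ∞) - (n i : ℕ∞)) = ((a - n i : ℕ) : ℕ∞) by
        exact_mod_cast (ENat.coe_sub a (n i)).symm] at hpi'
      have h1 : p i = a - n i := by exact_mod_cast hpi'
      have h2 : n i ≤ a := by exact_mod_cast hni
      have h3 : p i + n i = a := by omega
      show ((p i + n i : ℕ) : ℕ∞) = (a : ℕ∞)
      exact_mod_cast h3

/-- The relation `∼` on `V_Λ = Λ^{≤∞} × ℕ^k`. -/
def VRel {k : ℕ} {Λ : KGraphData k} (a b : BPath k Λ × (Fin k → ℕ)) : Prop :=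
  a.1.vert (wedge a.2 a.1.deg) = b.1.vert (wedge b.2 b.1.deg) ∧
  a.2 - wedge a.2 a.1.deg = b.2 - wedge b.2 b.1.deg

/-- The relation `≈` on `P_Λ = {(x;(m,n)) : x ∈ Λ^{≤∞}, m ≤ n}`
(as a relation on all triples). -/
def PRel {k : ℕ} {Λ : KGraphData k}
    (a b : BPath k Λ × (Fin k → ℕ) × (Fin k → ℕ)) : Prop :=
  a.1.seg (wedge a.2.1 a.1.deg) (wedge a.2.2 a.1.deg) =
    b.1.seg (wedge b.2.1 b.1.deg) (wedge b.2.2 b.1.deg) ∧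
  a.2.1 - wedge a.2.1 a.1.deg = b.2.1 - wedge b.2.1 b.1.deg ∧
  a.2.2 - a.2.1 = b.2.2 - b.2.1

/-- `z` is the concatenation `λ x` of the morphism `lam` with the boundary path `x`:
`z` has degree `d(lam) + d(x)`, `z(0, d lam) = lam`, and
`z(d lam, d lam + p) = x(0, p)` for all `p ≤ d(x)`. -/
def IsConcat {k : ℕ} (Λ : KGraphData k) (lam : Λ.Mor) (x z : BPath k Λ) : Prop :=
  z.deg = (fun i => (Λ.d lam i : ℕ∞) + x.deg i) ∧
  z.seg 0 (Λ.d lam) = lam ∧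
  ∀ p, leDeg k p x.deg → z.seg (Λ.d lam) (Λ.d lam + p) = x.seg 0 p

/-- `Λ` has local periodicity `m, n` at the vertex `v`: for every boundary path
`x ∈ vΛ^{≤∞}`, `m − m∧d(x) = n − n∧d(x)` and `σ^{m∧d(x)}(x) = σ^{n∧d(x)}(x)`. -/
def LocalPeriodicity {k : ℕ} (Λ : KGraphData k) (m n : Fin k → ℕ) (v : Λ.Obj) : Prop :=
  ∀ x : BPath k Λ, x.vert 0 = v →
    (m - wedge m x.deg = n - wedge n x.deg) ∧
    BPath.eqv (x.shift (wedge m x.deg) (wedge_leDeg m x.deg))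
      (x.shift (wedge n x.deg) (wedge_leDeg n x.deg))

lemma wedge_top {k : ℕ} (m : Fin k → ℕ) (D : Fin k → ℕ∞) (i : Fin k)
    (h : D i = ⊤) : wedge m D i = m i := by
  simp [wedge, h]

lemma wedge_fin {k : ℕ} (m : Fin k → ℕ) (D : Fin k → ℕ∞) (i : Fin k) (a : ℕ)
    (h : D i = (a : ℕ∞)) : wedge m D i = min (m i) a := by
  simp only [wedge, h]
  rw [show ((m i : ℕ∞) ⊓ (a : ℕ∞)) = ((min (m i) a : ℕ) : ℕ∞) by
    exact_mod_cast rfl]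
  exact ENat.toNat_coe _

lemma wedge_le {k : ℕ} (m : Fin k → ℕ) (D : Fin k → ℕ∞) (i : Fin k) :
    wedge m D i ≤ m i := by
  rcases eq_or_ne (D i) ⊤ with h | h
  · rw [wedge_top m D i h]
  · obtain ⟨a, ha⟩ := WithTop.ne_top_iff_exists.mp h
    rw [wedge_fin m D i a ha.symm]; omega

lemma sub_wedge_fin {k : ℕ} (m : Fin k → ℕ) (D : Fin k → ℕ∞) (i : Fin k) (a : ℕ)
    (h : D i = (a : ℕ∞)) :
    D i - (wedge m D i : ℕ∞) = ((a - min (m i) a : ℕ) : ℕ∞) := by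
  rw [h, wedge_fin m D i a h]
  exact_mod_cast (ENat.coe_sub a (min (m i) a)).symm

lemma sub_wedge_top {k : ℕ} (m : Fin k → ℕ) (D : Fin k → ℕ∞) (i : Fin k)
    (h : D i = ⊤) : D i - (wedge m D i : ℕ∞) = ⊤ := by
  rw [h]
  exact WithTop.top_sub_coe

/-- With `p ∧ D = 0`, `(p + q) ∧ D = q ∧ D`. -/
lemma wedge_p_add {k : ℕ} {p : Fin k → ℕ} {D : Fin k → ℕ∞}
    (hp : wedge p D = 0) (q : Fin k → ℕ) : wedge (p + q) D = wedge q D := by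
  funext i
  have hpi : wedge p D i = 0 := congrFun hp i
  rcases eq_or_ne (D i) ⊤ with h | h
  · rw [wedge_top _ D i h, wedge_top _ D i h]
    rw [wedge_top _ D i h] at hpi
    simp [hpi]
  · obtain ⟨a, ha⟩ := WithTop.ne_top_iff_exists.mp h
    rw [wedge_fin _ D i a ha.symm, wedge_fin _ D i a ha.symm]
    rw [wedge_fin _ D i a ha.symm] at hpi
    simp only [Pi.add_apply]
    omega

/-- `(m + l) ∧ D = m ∧ D + l ∧ (D - m ∧ D)`. -/
lemma wedge_split {k : ℕ} (m l : Fin k → ℕ) (D : Fin k → ℕ∞) :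
    wedge (m + l) D =
      wedge m D + wedge l (fun i => D i - (wedge m D i : ℕ∞)) := by
  funext i
  simp only [Pi.add_apply]
  rcases eq_or_ne (D i) ⊤ with h | h
  · rw [wedge_top _ D i h, wedge_top _ D i h,
      wedge_top l _ i (sub_wedge_top m D i h)]
    rfl
  · obtain ⟨a, ha⟩ := WithTop.ne_top_iff_exists.mp h
    rw [wedge_fin _ D i a ha.symm, wedge_fin _ D i a ha.symm,
      wedge_fin l _ i (a - min (m i) a) (sub_wedge_fin m D i a ha.symm)]
    simp only [Pi.add_apply]
    omega

/-- If `q ≤ D - m ∧ D` then `(m + q) ∧ D = m ∧ D + q`. -/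
lemma wedge_add_of_le {k : ℕ} (m q : Fin k → ℕ) (D : Fin k → ℕ∞)
    (hq : leDeg k q (fun i => D i - (wedge m D i : ℕ∞))) :
    wedge (m + q) D = wedge m D + q := by
  rw [wedge_split m q D]
  congr 1
  funext i
  have hqi : (q i : ℕ∞) ≤ D i - (wedge m D i : ℕ∞) := hq i
  rcases eq_or_ne (D i) ⊤ with h | h
  · exact wedge_top q _ i (sub_wedge_top m D i h)
  · obtain ⟨a, ha⟩ := WithTop.ne_top_iff_exists.mp h
    rw [wedge_fin q _ i (a - min (m i) a) (sub_wedge_fin m D i a ha.symm)]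
    rw [sub_wedge_fin m D i a ha.symm] at hqi
    have : q i ≤ a - min (m i) a := by exact_mod_cast hqi
    omega

/-- For `x ∈ Λ^{≤∞}` and `p, m, n ∈ ℕ^k` with `p ∧ d(x) = 0`:
`σ^m(y) = σ^n(y)` for `y = [x;(p,∞)]` (i.e. `(x;(p+m,p+m+l)) ≈ (x;(p+n,p+n+l))`
for all `l`) if and only if `σ^{m∧d(x)}(x) = σ^{n∧d(x)}(x)` and
`m − m∧d(x) = n − n∧d(x)`. -/
theorem periodic_projection (k : ℕ) (hk : 1 ≤ k) (Λ : KGraphData k)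
    (hΛ : IsKGraph Λ) (hrf : RowFinite Λ) (hlc : LocallyConvex Λ)
    (x : BPath k Λ) (p m n : Fin k → ℕ) (hp : wedge p x.deg = 0) :
    (∀ l : Fin k → ℕ, PRel (x, p + m, p + m + l) (x, p + n, p + n + l)) ↔
      (BPath.eqv (x.shift (wedge m x.deg) (wedge_leDeg m x.deg))
          (x.shift (wedge n x.deg) (wedge_leDeg n x.deg)) ∧
        m - wedge m x.deg = n - wedge n x.deg) := by
  set D := x.deg with hD
  have hwMle : ∀ i, wedge m D i ≤ m i := wedge_le m D
  have hwNle : ∀ i, wedge n D i ≤ n i := wedge_le n D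
  constructor
  · intro h
    -- extract the three clauses, with the `p` removed from the wedges
    have hA : ∀ l : Fin k → ℕ,
        x.seg (wedge m D) (wedge (m + l) D) =
          x.seg (wedge n D) (wedge (n + l) D) := by
      intro l
      have := (h l).1
      simpa only [show p + m + l = p + (m + l) by ring,
        show p + n + l = p + (n + l) by ring,
        ← hD, wedge_p_add hp] using this
    have hB : m - wedge m D = n - wedge n D := by
      have := (h 0).2.1
      rw [wedge_p_add hp m, wedge_p_add hp n] at this
      funext i
      have hi := congrFun this i
      simp only [Pi.sub_apply, Pi.add_apply] at hi ⊢
      have h1 := hwMle i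
      have h2 := hwNle i
      omega
    -- degrees of both sides of `hA l` agree
    have hdeg : ∀ l : Fin k → ℕ,
        wedge (m + l) D - wedge m D = wedge (n + l) D - wedge n D := by
      intro l
      have h1 : wedge m D ≤ wedge (m + l) D := by
        rw [wedge_split m l D]; intro i; simp only [Pi.add_apply]; omega
      have h2 : wedge n D ≤ wedge (n + l) D := by
        rw [wedge_split n l D]; intro i; simp only [Pi.add_apply]; omega
      have := congrArg Λ.d (hA l)
      rwa [x.seg_deg (wedge m D) (wedge (m + l) D) h1 (wedge_leDeg _ D),
        x.seg_deg (wedge n D) (wedge (n + l) D) h2 (wedge_leDeg _ D)] at this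
    -- the shifted degrees agree
    have hsame : (fun i => D i - (wedge m D i : ℕ∞)) =
        fun i => D i - (wedge n D i : ℕ∞) := by
      funext i
      rcases eq_or_ne (D i) ⊤ with hDi | hDi
      · rw [sub_wedge_top m D i hDi, sub_wedge_top n D i hDi]
      · obtain ⟨a, ha⟩ := WithTop.ne_top_iff_exists.mp hDi
        rw [sub_wedge_fin m D i a ha.symm, sub_wedge_fin n D i a ha.symm]
        -- use `hdeg` with a large `l`
        set l : Fin k → ℕ := fun _ => a with hl
        have hdi := congrFun (hdeg l) i
        simp only [Pi.sub_apply] at hdi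
        rw [wedge_split m l D, wedge_split n l D] at hdi
        simp only [Pi.add_apply] at hdi
        rw [wedge_fin l _ i (a - min (m i) a) (sub_wedge_fin m D i a ha.symm),
          wedge_fin l _ i (a - min (n i) a) (sub_wedge_fin n D i a ha.symm),
          wedge_fin m D i a ha.symm, wedge_fin n D i a ha.symm] at hdi
        simp only [hl] at hdi
        norm_cast
        omega
    refine ⟨⟨hsame, ?_⟩, hB⟩
    -- segments of the shifted paths agree
    intro p' q' hpq hq'
    have hq'M : leDeg k q' (fun i => D i - (wedge m D i : ℕ∞)) := hq'
    have hp'M : leDeg k p' (fun i => D i - (wedge m D i : ℕ∞)) :=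
      fun i => le_trans (by exact_mod_cast hpq i) (hq'M i)
    have hq'N : leDeg k q' (fun i => D i - (wedge n D i : ℕ∞)) := hsame ▸ hq'M
    have hp'N : leDeg k p' (fun i => D i - (wedge n D i : ℕ∞)) := hsame ▸ hp'M
    have hAq : x.seg (wedge m D) (wedge m D + q') =
        x.seg (wedge n D) (wedge n D + q') := by
      have := hA q'
      rwa [wedge_add_of_le m q' D hq'M, wedge_add_of_le n q' D hq'N] at this
    have hAp : x.seg (wedge m D) (wedge m D + p') =
        x.seg (wedge n D) (wedge n D + p') := by
      have := hA p'
      rwa [wedge_add_of_le m p' D hp'M, wedge_add_of_le n p' D hp'N] at this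
    -- factorisation uniqueness
    have hMq : leDeg k (wedge m D + q') D := by
      have := leDeg_add (wedge_leDeg m D) hq'M
      rwa [add_comm] at this
    have hNq : leDeg k (wedge n D + q') D := by
      have := leDeg_add (wedge_leDeg n D) hq'N
      rwa [add_comm] at this
    have hle1 : wedge m D ≤ wedge m D + p' := by
      intro i; simp only [Pi.add_apply]; omega
    have hle2 : wedge m D + p' ≤ wedge m D + q' := add_le_add_right hpq _
    have hle3 : wedge n D ≤ wedge n D + p' := by
      intro i; simp only [Pi.add_apply]; omega
    have hle4 : wedge n D + p' ≤ wedge n D + q' := add_le_add_right hpq _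
    have hMp : leDeg k (wedge m D + p') D := fun i =>
      le_trans (by exact_mod_cast hle2 i) (hMq i)
    have hNp : leDeg k (wedge n D + p') D := fun i =>
      le_trans (by exact_mod_cast hle4 i) (hNq i)
    have hdf : Λ.d (x.seg (wedge m D) (wedge m D + q')) = p' + (q' - p') := by
      rw [x.seg_deg (wedge m D) (wedge m D + q') (le_trans hle1 hle2) hMq]
      funext i
      simp only [Pi.sub_apply, Pi.add_apply]
      have := Pi.le_def.mp hpq i
      omega
    obtain ⟨pr, hpr, hprU⟩ :=
      hΛ.factor (x.seg (wedge m D) (wedge m D + q')) p' (q' - p') hdf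
    have key1 : (x.seg (wedge m D) (wedge m D + p'),
        x.seg (wedge m D + p') (wedge m D + q')) = pr := by
      apply hprU
      refine ⟨?_, ?_, ?_, ?_⟩
      · rw [x.seg_s (wedge m D) (wedge m D + p') hle1 hMp,
          x.seg_r (wedge m D + p') (wedge m D + q') hle2 hMq]
      · rw [x.seg_deg (wedge m D) (wedge m D + p') hle1 hMp]
        funext i
        simp only [Pi.sub_apply, Pi.add_apply]; omega
      · rw [x.seg_deg (wedge m D + p') (wedge m D + q') hle2 hMq]
        funext i
        simp only [Pi.sub_apply, Pi.add_apply]; omega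
      · exact x.seg_comp (wedge m D) (wedge m D + p') (wedge m D + q')
          hle1 hle2 hMq
    have key2 : (x.seg (wedge n D) (wedge n D + p'),
        x.seg (wedge n D + p') (wedge n D + q')) = pr := by
      apply hprU
      refine ⟨?_, ?_, ?_, ?_⟩
      · rw [x.seg_s (wedge n D) (wedge n D + p') hle3 hNp,
          x.seg_r (wedge n D + p') (wedge n D + q') hle4 hNq]
      · rw [x.seg_deg (wedge n D) (wedge n D + p') hle3 hNp]
        funext i
        simp only [Pi.sub_apply, Pi.add_apply]; omega
      · rw [x.seg_deg (wedge n D + p') (wedge n D + q') hle4 hNq]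
        funext i
        simp only [Pi.sub_apply, Pi.add_apply]; omega
      · rw [x.seg_comp (wedge n D) (wedge n D + p') (wedge n D + q')
          hle3 hle4 hNq]
        exact hAq.symm
    have hmain : x.seg (wedge m D + p') (wedge m D + q') =
        x.seg (wedge n D + p') (wedge n D + q') :=
      congrArg Prod.snd (key1.trans key2.symm)
    show x.seg (p' + wedge m D) (q' + wedge m D) =
      x.seg (p' + wedge n D) (q' + wedge n D)
    rwa [add_comm p' (wedge m D), add_comm q' (wedge m D),
      add_comm p' (wedge n D), add_comm q' (wedge n D)]
  · rintro ⟨⟨hsame, hseg⟩, hsub⟩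
    intro l
    have hsame' : (fun i => D i - (wedge m D i : ℕ∞)) =
        fun i => D i - (wedge n D i : ℕ∞) := hsame
    refine ⟨?_, ?_, ?_⟩
    · -- segment equality
      show x.seg (wedge (p + m) D) (wedge (p + m + l) D) =
        x.seg (wedge (p + n) D) (wedge (p + n + l) D)
      rw [show p + m + l = p + (m + l) by ring,
        show p + n + l = p + (n + l) by ring,
        wedge_p_add hp, wedge_p_add hp, wedge_p_add hp, wedge_p_add hp,
        wedge_split m l D, wedge_split n l D]
      have hq2 : wedge l (fun i => D i - (wedge n D i : ℕ∞)) =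
          wedge l (fun i => D i - (wedge m D i : ℕ∞)) := by
        rw [hsame']
      rw [hq2]
      set q : Fin k → ℕ := wedge l (fun i => D i - (wedge m D i : ℕ∞)) with hq
      have h0 := hseg 0 q (by intro i; simp)
        (by rw [hq]; exact wedge_leDeg l _)
      have h1 : x.seg (0 + wedge m D) (q + wedge m D) =
          x.seg (0 + wedge n D) (q + wedge n D) := h0
      simpa only [zero_add, add_comm q (wedge m D), add_comm q (wedge n D)]
        using h1
    · -- the `m − m∧d(x)` clause
      show (p + m) - wedge (p + m) D = (p + n) - wedge (p + n) D
      rw [wedge_p_add hp m, wedge_p_add hp n]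
      funext i
      have hi : m i - wedge m D i = n i - wedge n D i := congrFun hsub i
      simp only [Pi.sub_apply, Pi.add_apply]
      have h1 := hwMle i
      have h2 := hwNle i
      omega
    · -- the degree clause
      show (p + m + l) - (p + m) = (p + n + l) - (p + n)
      funext i
      simp only [Pi.sub_apply, Pi.add_apply]
      omega
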